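/- For every λ > 0 there exists a unique κ ∈ ℝ such that κ(1-Φ(κ))/Φ'(κ) = 1 - λ/2. Moreover κ > 0 if 0 < λ < 2, κ = 0 if λ = 2, and κ < 0 if λ > 2. -/

import Mathlib

open Real MeasureTheory Filter

open Set Topology in
/-- The standard normal CDF. -/
noncomputable def Phi (x : ℝ) : ℝ := ∫ t in Set.Iic x, (Real.sqrt (2 * Real.pi))⁻¹ * Real.exp (-t ^ 2 / 2)

/-- The standard normal density. -/
noncomputable def phi (x : ℝ) : ℝ := (Real.sqrt (2 * Real.pi))⁻¹ * Real.exp (-x ^ 2 / 2)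

section aux
open Set Topology


lemma phi_pos (x : ℝ) : 0 < phi x := by
  have h2pi : (0:ℝ) < Real.sqrt (2 * Real.pi) := Real.sqrt_pos.mpr (by positivity)
  exact mul_pos (inv_pos.mpr h2pi) (Real.exp_pos _)

lemma phi_cont : Continuous phi := by
  apply Continuous.mul continuous_const
  exact (Real.continuous_exp.comp (by continuity))

lemma integrable_phi : Integrable phi := by
  have := integrable_exp_neg_mul_sq (b := (1/2 : ℝ)) (by norm_num)
  apply Integrable.const_mul
  convert this using 2 with x
  ring_nf

lemma integral_phi : ∫ x, phi x = 1 := by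
  have h := integral_gaussian (1/2 : ℝ)
  have h2 : ∫ x : ℝ, Real.exp (-x^2/2) = Real.sqrt (2 * Real.pi) := by
    rw [show Real.sqrt (2*Real.pi) = Real.sqrt (Real.pi / (1/2)) by norm_num [mul_comm], ← h]
    congr 1 with x; ring_nf
  unfold phi
  rw [integral_const_mul, h2]
  rw [inv_mul_cancel₀]
  positivity

lemma Phi_eq (x : ℝ) : Phi x = ∫ t in Set.Iic x, phi t := rfl

lemma hasDerivAt_Phi (x : ℝ) : HasDerivAt Phi (phi x) x := by
  have key : ∀ y : ℝ, Phi y = Phi 0 + ∫ t in (0:ℝ)..y, phi t := by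
    intro y
    have h := intervalIntegral.integral_Iic_sub_Iic (a := (0:ℝ)) (b := y) (f := phi)
      (μ := volume) integrable_phi.integrableOn integrable_phi.integrableOn
    rw [← Phi_eq, ← Phi_eq] at h
    linarith
  have hd : HasDerivAt (fun y => ∫ t in (0:ℝ)..y, phi t) (phi x) x :=
    intervalIntegral.integral_hasDerivAt_right integrable_phi.intervalIntegrable
      phi_cont.aestronglyMeasurable.stronglyMeasurableAtFilter phi_cont.continuousAt
  have := (hd.const_add (Phi 0))
  exact this.congr_of_eventuallyEq (Filter.Eventually.of_forall key)

lemma one_sub_Phi (x : ℝ) : 1 - Phi x = ∫ t in Set.Ioi x, phi t := by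
  have := MeasureTheory.integral_add_compl (measurableSet_Iic (a := x)) integrable_phi
  rw [Set.compl_Iic] at this
  rw [← integral_phi, Phi_eq]
  linarith [this]

lemma Phi_lt_one (x : ℝ) : Phi x < 1 := by
  have h : 0 < ∫ t in Set.Ioi x, phi t := by
    rw [setIntegral_pos_iff_support_of_nonneg_ae]
    · have : (Function.support phi) = Set.univ := by
        ext t; simp [Function.mem_support, (phi_pos t).ne']
      rw [this, Set.univ_inter]
      simp [Real.volume_Ioi]
    · filter_upwards with t using (phi_pos t).le
    · exact integrable_phi.integrableOn
  have := one_sub_Phi x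
  linarith

lemma Phi_mono : Monotone Phi := by
  apply monotone_of_deriv_nonneg
  · exact fun x => (hasDerivAt_Phi x).differentiableAt
  · intro x; rw [(hasDerivAt_Phi x).deriv]; exact (phi_pos x).le

lemma hasDerivAt_phi (x : ℝ) : HasDerivAt phi (-x * phi x) x := by
  have h1 : HasDerivAt (fun t : ℝ => -t^2/2) (-x) x := by
    have : HasDerivAt (fun t : ℝ => -t^2/2) (-(2*x^(2-1))/2) x := by
      exact (((hasDerivAt_pow 2 x).neg).div_const 2)
    convert this using 1
    push_cast
    ring
  have h2 := (h1.exp).const_mul ((Real.sqrt (2 * Real.pi))⁻¹)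
  refine h2.congr_deriv ?_
  unfold phi; ring

lemma tail_bound {x : ℝ} (hx : 2 ≤ x) :
    1 - Phi x ≤ (Real.sqrt (2 * Real.pi))⁻¹ * Real.exp (-x) := by
  rw [one_sub_Phi]
  have hint : IntegrableOn (fun t : ℝ => (Real.sqrt (2 * Real.pi))⁻¹ * Real.exp (-t)) (Set.Ioi x) := by
    apply Integrable.const_mul
    have := exp_neg_integrableOn_Ioi x (b := 1) one_pos
    simp at this; exact this
  calc ∫ t in Set.Ioi x, phi t
      ≤ ∫ t in Set.Ioi x, (Real.sqrt (2 * Real.pi))⁻¹ * Real.exp (-t) := by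
        apply setIntegral_mono_on integrable_phi.integrableOn hint measurableSet_Ioi
        intro t ht
        unfold phi
        have h2t : 2 ≤ t := le_trans hx (le_of_lt ht)
        gcongr
        nlinarith
    _ = (Real.sqrt (2 * Real.pi))⁻¹ * Real.exp (-x) := by
        rw [integral_const_mul, integral_exp_neg_Ioi]

lemma phi_tendsto : Tendsto phi atTop (𝓝 0) := by
  have : Tendsto (fun x : ℝ => -x^2/2) atTop atBot := by
    apply Tendsto.atBot_div_const (by norm_num)
    apply tendsto_neg_atBot_iff.mpr
    exact tendsto_pow_atTop (by norm_num)
  have := Real.tendsto_exp_atBot.comp this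
  have h2 := this.const_mul ((Real.sqrt (2 * Real.pi))⁻¹)
  rw [mul_zero] at h2
  exact h2

lemma tail_tendsto : Tendsto (fun x => x * (1 - Phi x)) atTop (𝓝 0) := by
  have hb : Tendsto (fun x : ℝ => (Real.sqrt (2 * Real.pi))⁻¹ * (x * Real.exp (-x))) atTop (𝓝 ((Real.sqrt (2 * Real.pi))⁻¹ * 0)) := by
    apply Tendsto.const_mul
    simpa using tendsto_pow_mul_exp_neg_atTop_nhds_zero 1
  rw [mul_zero] at hb
  apply squeeze_zero_norm' _ hb
  filter_upwards [eventually_ge_atTop (2:ℝ)] with x hx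
  have h1 : 0 ≤ 1 - Phi x := by linarith [Phi_lt_one x]
  have h2 := tail_bound hx
  rw [Real.norm_eq_abs, abs_of_nonneg (by positivity)]
  calc x * (1 - Phi x) ≤ x * ((Real.sqrt (2 * Real.pi))⁻¹ * Real.exp (-x)) := by
        apply mul_le_mul_of_nonneg_left h2 (by linarith)
    _ = (Real.sqrt (2 * Real.pi))⁻¹ * (x * Real.exp (-x)) := by ring

lemma sq_tail_tendsto : Tendsto (fun x => (1 + x^2) * (1 - Phi x)) atTop (𝓝 0) := by
  have hb : Tendsto (fun x : ℝ => (Real.sqrt (2 * Real.pi))⁻¹ * ((1 + x^2) * Real.exp (-x))) atTop (𝓝 ((Real.sqrt (2 * Real.pi))⁻¹ * 0)) := by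
    apply Tendsto.const_mul
    have h0 := tendsto_pow_mul_exp_neg_atTop_nhds_zero 0
    have h2 := tendsto_pow_mul_exp_neg_atTop_nhds_zero 2
    have := h0.add h2
    rw [add_zero] at this
    convert this using 2 with x
    simp; ring
  rw [mul_zero] at hb
  apply squeeze_zero_norm' _ hb
  filter_upwards [eventually_ge_atTop (2:ℝ)] with x hx
  have h1 : 0 ≤ 1 - Phi x := by linarith [Phi_lt_one x]
  have h2 := tail_bound hx
  have hx2 : (0:ℝ) ≤ 1 + x^2 := by positivity
  rw [Real.norm_eq_abs, abs_of_nonneg (by positivity)]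
  calc (1 + x^2) * (1 - Phi x) ≤ (1 + x^2) * ((Real.sqrt (2 * Real.pi))⁻¹ * Real.exp (-x)) :=
        mul_le_mul_of_nonneg_left h2 hx2
    _ = (Real.sqrt (2 * Real.pi))⁻¹ * ((1 + x^2) * Real.exp (-x)) := by ring

noncomputable def uu (x : ℝ) : ℝ := phi x - x * (1 - Phi x)

lemma hasDerivAt_uu (x : ℝ) : HasDerivAt uu (-(1 - Phi x)) x := by
  have h1 := hasDerivAt_phi x
  have h2 : HasDerivAt (fun y => y * (1 - Phi y)) ((1 - Phi x) + x * (-phi x)) x := by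
    exact ((hasDerivAt_id' x).mul ((hasDerivAt_Phi x).const_sub 1)).congr_deriv (by ring)
  have := h1.sub h2
  refine this.congr_deriv ?_
  ring

lemma uu_tendsto : Tendsto uu atTop (𝓝 0) := by
  have := phi_tendsto.sub tail_tendsto
  rw [sub_zero] at this
  exact this

lemma uu_anti : StrictAnti uu := by
  apply strictAnti_of_deriv_neg
  intro x
  rw [(hasDerivAt_uu x).deriv]
  linarith [Phi_lt_one x]

lemma uu_pos (x : ℝ) : 0 < uu x := by
  have h1 : uu (x + 1) ≤ uu x - (uu x - uu (x+1)) := by linarith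
  have h2 : 0 ≤ uu (x + 1) := by
    apply le_of_tendsto uu_tendsto
    filter_upwards [eventually_ge_atTop (x+1)] with y hy
    exact uu_anti.antitone hy
  linarith [uu_anti (show x < x + 1 by linarith)]

noncomputable def hh (x : ℝ) : ℝ := (1 + x^2) * (1 - Phi x) - x * phi x

lemma hasDerivAt_hh (x : ℝ) : HasDerivAt hh (-2 * uu x) x := by
  have h1 : HasDerivAt (fun y : ℝ => (1 + y^2) * (1 - Phi y))
      ((0 + 2*x^(2-1)) * (1 - Phi x) + (1 + x^2) * (-phi x)) x :=
    ((hasDerivAt_const x (1:ℝ)).add (hasDerivAt_pow 2 x)).mul ((hasDerivAt_Phi x).const_sub 1)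
  have h2 : HasDerivAt (fun y : ℝ => y * phi y) (1 * phi x + x * (-x * phi x)) x :=
    (hasDerivAt_id x).mul (hasDerivAt_phi x)
  have := h1.sub h2
  refine this.congr_deriv ?_
  unfold uu
  push_cast
  ring

lemma hh_tendsto : Tendsto hh atTop (𝓝 0) := by
  have h2 : Tendsto (fun x : ℝ => x * phi x) atTop (𝓝 0) := by
    have hb := (tendsto_pow_mul_exp_neg_atTop_nhds_zero 1).const_mul ((Real.sqrt (2 * Real.pi))⁻¹)
    rw [mul_zero] at hb
    apply squeeze_zero_norm' _ hb
    filter_upwards [eventually_ge_atTop (2:ℝ)] with x hx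
    have hxe : x * phi x = (Real.sqrt (2 * Real.pi))⁻¹ * (x ^ 1 * Real.exp (-x^2/2)) := by
      unfold phi; ring
    have hle : Real.exp (-x^2/2) ≤ Real.exp (-x) := by
      rw [Real.exp_le_exp]; nlinarith
    rw [Real.norm_eq_abs, abs_of_nonneg (mul_nonneg (by linarith) (phi_pos x).le), hxe]
    have h1x : (0:ℝ) ≤ x ^ 1 := by nlinarith
    have hC : (0:ℝ) ≤ (Real.sqrt (2 * Real.pi))⁻¹ := by positivity
    have := mul_le_mul_of_nonneg_left hle h1x
    nlinarith
  have := sq_tail_tendsto.sub h2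
  rw [sub_zero] at this
  exact this

lemma hh_anti : StrictAnti hh := by
  apply strictAnti_of_deriv_neg
  intro x
  rw [(hasDerivAt_hh x).deriv]
  linarith [uu_pos x]

lemma hh_pos (x : ℝ) : 0 < hh x := by
  have h2 : 0 ≤ hh (x + 1) := by
    apply le_of_tendsto hh_tendsto
    filter_upwards [eventually_ge_atTop (x+1)] with y hy
    exact hh_anti.antitone hy
  linarith [hh_anti (show x < x + 1 by linarith)]


end aux

/-- The function `g(κ) = κ(1-Φ(κ))/Φ'(κ)`. -/
noncomputable def g (κ : ℝ) : ℝ := κ * (1 - Phi κ) / phi κ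

section aux2
open Set Topology


lemma hasDerivAt_g (x : ℝ) : HasDerivAt g (hh x / phi x) x := by
  have hN : HasDerivAt (fun y => y * (1 - Phi y)) ((1 - Phi x) + x * (-phi x)) x := by
    exact ((hasDerivAt_id' x).mul ((hasDerivAt_Phi x).const_sub 1)).congr_deriv (by ring)
  have hd := hN.div (hasDerivAt_phi x) (phi_pos x).ne'
  refine hd.congr_deriv ?_
  unfold hh
  rw [div_eq_div_iff (pow_ne_zero 2 (phi_pos x).ne') (phi_pos x).ne']
  ring

lemma g_strictMono : StrictMono g := by
  apply strictMono_of_deriv_pos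
  intro x
  rw [(hasDerivAt_g x).deriv]
  exact div_pos (hh_pos x) (phi_pos x)

lemma g_cont : Continuous g := by
  have : Differentiable ℝ g := fun x => (hasDerivAt_g x).differentiableAt
  exact this.continuous

lemma g_zero : g 0 = 0 := by simp [g]

lemma g_lower {x : ℝ} (hx : 0 < x) : x^2 / (1 + x^2) < g x := by
  have h := hh_pos x
  unfold hh at h
  unfold g
  rw [div_lt_div_iff₀ (by positivity) (phi_pos x)]
  nlinarith [phi_pos x]

lemma g_upper_neg {x : ℝ} (hx : x ≤ -1) :
    g x ≤ x * ((1 - Phi (-1)) / phi 0) := by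
  have hε : 0 < 1 - Phi (-1) := by linarith [Phi_lt_one (-1)]
  have h1 : 1 - Phi (-1) ≤ 1 - Phi x := by linarith [Phi_mono (show x ≤ -1 from hx)]
  have h2 : phi x ≤ phi 0 := by
    unfold phi
    have he : Real.exp (-x^2/2) ≤ Real.exp (-(0:ℝ)^2/2) := by
      rw [Real.exp_le_exp]; nlinarith
    exact mul_le_mul_of_nonneg_left he (by positivity)
  have hδ : (1 - Phi (-1)) / phi 0 ≤ (1 - Phi x) / phi x :=
    div_le_div₀ (by linarith) h1 (phi_pos x) h2
  have hx0 : x < 0 := by linarith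
  calc g x = x * ((1 - Phi x) / phi x) := by unfold g; ring
    _ ≤ x * ((1 - Phi (-1)) / phi 0) := by
        apply mul_le_mul_of_nonpos_left hδ (by linarith)

lemma g_exists {c : ℝ} (hc : c < 1) : ∃ κ, g κ = c := by
  rcases lt_trichotomy c 0 with h | h | h
  · -- c < 0
    set δ := (1 - Phi (-1)) / phi 0 with hδdef
    have hδ : 0 < δ := div_pos (by linarith [Phi_lt_one (-1)]) (phi_pos 0)
    set a := min (-1) (c/δ) with ha
    have ha1 : a ≤ -1 := min_le_left _ _
    have hga : g a ≤ c := by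
      calc g a ≤ a * δ := g_upper_neg ha1
        _ ≤ (c/δ) * δ := by
            apply mul_le_mul_of_nonneg_right (min_le_right _ _) hδ.le
        _ = c := by field_simp
    have h0 : a ≤ 0 := by linarith
    have := intermediate_value_Icc h0 g_cont.continuousOn
    have hmem : c ∈ Set.Icc (g a) (g 0) := ⟨hga, by rw [g_zero]; linarith⟩
    obtain ⟨κ, _, hκ⟩ := this hmem
    exact ⟨κ, hκ⟩
  · exact ⟨0, by rw [g_zero, h]⟩
  · -- 0 < c < 1
    set b := max 1 (c/(1-c)) with hb
    have hb1 : (1:ℝ) ≤ b := le_max_left _ _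
    have hb2 : c/(1-c) ≤ b := le_max_right _ _
    have hbsq : c/(1-c) ≤ b^2 := le_trans hb2 (by nlinarith)
    have h1c : 0 < 1 - c := by linarith
    have hcb : c ≤ b^2/(1+b^2) := by
      rw [div_le_iff₀ h1c] at hbsq
      rw [le_div_iff₀ (by positivity)]
      nlinarith
    have hgb : c ≤ g b := le_trans hcb (g_lower (by linarith)).le
    have h0 : (0:ℝ) ≤ b := by linarith
    have := intermediate_value_Icc h0 g_cont.continuousOn
    have hmem : c ∈ Set.Icc (g 0) (g b) := ⟨by rw [g_zero]; linarith, hgb⟩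
    obtain ⟨κ, _, hκ⟩ := this hmem
    exact ⟨κ, hκ⟩


end aux2

open Set Topology in
/-- unique solution of g(κ) = 1 - λ/2, with the sign of κ determined by λ. -/
theorem stmt1 (lam : ℝ) (hlam : 0 < lam) :
    (∃! κ : ℝ, g κ = 1 - lam / 2) ∧
    ∀ κ : ℝ, g κ = 1 - lam / 2 →
      ((lam < 2 → 0 < κ) ∧ (lam = 2 → κ = 0) ∧ (2 < lam → κ < 0)) := by
  have hc : 1 - lam/2 < 1 := by linarith
  obtain ⟨κ₀, hκ₀⟩ := g_exists hc
  constructor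
  · exact ⟨κ₀, hκ₀, fun y hy => g_strictMono.injective (by rw [hy, hκ₀])⟩
  · intro κ hκ
    refine ⟨fun h => ?_, fun h => ?_, fun h => ?_⟩
    · by_contra hn
      push_neg at hn
      have := g_strictMono.monotone hn
      rw [g_zero, hκ] at this
      linarith
    · apply g_strictMono.injective
      rw [hκ, g_zero, h]; norm_num
    · by_contra hn
      push_neg at hn
      have := g_strictMono.monotone hn
      rw [g_zero, hκ] at this
      linarith
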